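/- Let (Ω_n, β_n)_n be an inductive system of probability spaces with binary extension data given by functions X_n, Y_n : Ω_n → {−1,+1}, and suppose there exist measurable functions h_n : Ω_n → 𝕋 = {z ∈ ℂ : |z|=1} with (h_{n+1} ∘ β_n)·X_n = h_n·Y_n a.e. for all n. Then there exist measurable functions U_n : Ω_n → {−1,+1} with (U_{n+1} ∘ β_n)·X_n = U_n·Y_n a.e. for all n. -/

import Mathlib

open MeasureTheory

noncomputable def phiSign (z : ℂ) : ℝ :=
  if 0 < z.im ∨ (z.im = 0 ∧ 0 < z.re) then 1 else -1

lemma phiSign_measurable : Measurable phiSign := by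
  unfold phiSign
  apply Measurable.ite _ measurable_const measurable_const
  exact (measurableSet_lt measurable_const Complex.measurable_im).union
    ((Complex.measurable_im (measurableSet_singleton (0:ℝ))).inter
      (measurableSet_lt measurable_const Complex.measurable_re))

lemma phiSign_neg (z : ℂ) (hz : z ≠ 0) : phiSign (-z) = -phiSign z := by
  unfold phiSign
  simp only [Complex.neg_im, Complex.neg_re]
  split_ifs with h1 h2 h2
  · exfalso
    rcases h1 with a | ⟨a, b⟩ <;> rcases h2 with c | ⟨c, d⟩ <;> linarith
  · norm_num
  · rfl
  · exfalso
    push_neg at h1 h2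
    obtain ⟨h1a, h1b⟩ := h1
    obtain ⟨h2a, h2b⟩ := h2
    have him : z.im = 0 := le_antisymm h2a (by linarith)
    have hre0 : z.re = 0 := le_antisymm (h2b him)
      (by have := h1b (by rw [him, neg_zero]); linarith)
    exact hz (Complex.ext hre0 him)

/-- if a unimodular (𝕋-valued) cocycle transfer function `h` exists between
the `±1`-valued cocycles `X` and `Y`, then a `±1`-valued one `U` exists as well. -/
theorem stmt_10 (Ω : ℕ → Type*) [∀ n, MeasurableSpace (Ω n)]
    (μ : ∀ n, Measure (Ω n)) [∀ n, IsProbabilityMeasure (μ n)]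
    (β : ∀ n, Ω n → Ω (n + 1))
    (hβ : ∀ n, MeasurePreserving (β n) (μ n) (μ (n + 1)))
    (X Y : ∀ n, Ω n → ℝ)
    (hXm : ∀ n, Measurable (X n)) (hYm : ∀ n, Measurable (Y n))
    (hXv : ∀ n ω, X n ω = -1 ∨ X n ω = 1) (hYv : ∀ n ω, Y n ω = -1 ∨ Y n ω = 1)
    (h : ∀ n, Ω n → ℂ) (hhm : ∀ n, Measurable (h n))
    (hhmod : ∀ n ω, ‖h n ω‖ = 1)
    (hcoc : ∀ n, ∀ᵐ ω ∂(μ n),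
      h (n + 1) (β n ω) * (X n ω : ℂ) = h n ω * (Y n ω : ℂ)) :
    ∃ U : ∀ n, Ω n → ℝ, (∀ n, Measurable (U n)) ∧ (∀ n ω, U n ω = -1 ∨ U n ω = 1) ∧
      ∀ n, ∀ᵐ ω ∂(μ n), U (n + 1) (β n ω) * X n ω = U n ω * Y n ω := by
  refine ⟨fun n ω => phiSign (h n ω), fun n => phiSign_measurable.comp (hhm n),
    fun n ω => ?_, fun n => ?_⟩
  · unfold phiSign
    by_cases hc : 0 < (h n ω).im ∨ ((h n ω).im = 0 ∧ 0 < (h n ω).re)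
    · right; simp [hc]
    · left; simp [hc]
  · filter_upwards [hcoc n] with ω hω
    have hz : h n ω ≠ 0 := by
      intro h0
      have := hhmod n ω
      rw [h0] at this; simp at this
    rcases hXv n ω with hX | hX <;> rcases hYv n ω with hY | hY <;>
      rw [hX, hY] at hω ⊢ <;> push_cast at hω
    · have hh : h (n + 1) (β n ω) = h n ω := by linear_combination -hω
      rw [hh]
    · have hh : h (n + 1) (β n ω) = -h n ω := by linear_combination -hω
      rw [hh, phiSign_neg _ hz]; ring
    · have hh : h (n + 1) (β n ω) = -h n ω := by linear_combination hω
      rw [hh, phiSign_neg _ hz]; ring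
    · have hh : h (n + 1) (β n ω) = h n ω := by linear_combination hω
      rw [hh]
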